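/- For any connected bipartite graph G on n vertices, the Kemeny constant satisfies K ≥ (2n-3)/2, with equality attained by the complete bipartite graph K_{n/2,n/2} (n even). -/

import Mathlib

open Finset Matrix Polynomial

/-- The transition matrix of the simple random walk on a graph:
`P i j = 1/deg(i)` if `i ~ j`, and `0` otherwise. -/
noncomputable def transMatrix {V : Type*} [Fintype V] (G : SimpleGraph V)
    [DecidableRel G.Adj] : Matrix V V ℝ :=
  fun i j => if G.Adj i j then (1 : ℝ) / (G.degree i) else 0

/-- The stationary distribution of the simple random walk: `π i = deg(i) / (2|E|)`. -/
noncomputable def stationary {V : Type*} [Fintype V] [DecidableEq V] (G : SimpleGraph V)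
    [DecidableRel G.Adj] : V → ℝ :=
  fun i => (G.degree i : ℝ) / (2 * G.edgeFinset.card)

/-- `H` is the table of expected hitting times of the simple random walk on `G`:
`H a b = E_a T_b`.  It is characterized by `H b b = 0` and the one-step
(first-step analysis) equations `H a b = 1 + ∑_j P a j * H j b` for `a ≠ b`. -/
def IsHittingTime {V : Type*} [Fintype V] (G : SimpleGraph V) [DecidableRel G.Adj]
    (H : V → V → ℝ) : Prop :=
  (∀ b, H b b = 0) ∧ ∀ a b, a ≠ b → H a b = 1 + ∑ j, transMatrix G a j * H j b

/-- `R` is the table of effective resistances of `G` (unit resistor on each edge):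
`R a b = v a - v b` where `v` is a potential for a unit current flow from `a` to `b`,
i.e. `L v = 1_a - 1_b` for the graph Laplacian `L`. -/
def IsEffectiveResistance {V : Type*} [Fintype V] [DecidableEq V] (G : SimpleGraph V)
    [DecidableRel G.Adj] (R : V → V → ℝ) : Prop :=
  ∀ a b, ∃ v : V → ℝ,
    G.lapMatrix ℝ *ᵥ v =
      (fun x => (if x = a then (1 : ℝ) else 0) - (if x = b then (1 : ℝ) else 0)) ∧
    R a b = v a - v b

namespace KemenyAux
set_option linter.unusedSectionVars false



variable {V : Type*} [Fintype V] [DecidableEq V] (G : SimpleGraph V) [DecidableRel G.Adj]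

lemma degree_pos (hconn : G.Connected) (h2 : 2 ≤ Fintype.card V) (v : V) :
    0 < G.degree v := by
  rw [G.degree_pos_iff_exists_adj]
  obtain ⟨w, hw⟩ := Fintype.exists_ne_of_one_lt_card h2 v
  obtain ⟨p⟩ := hconn.preconnected v w
  cases p with
  | nil => exact absurd rfl hw.symm
  | cons h _ => exact ⟨_, h⟩

lemma trans_nonneg (i j : V) : 0 ≤ transMatrix G i j := by
  unfold transMatrix; split <;> positivity

lemma trans_rowsum (i : V) (hdeg : 0 < G.degree i) : ∑ j, transMatrix G i j = 1 := by
  unfold transMatrix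
  rw [Finset.sum_ite, Finset.sum_const_zero, add_zero, Finset.sum_const]
  have : (Finset.univ.filter (G.Adj i ·)).card = G.degree i := by
    rw [← SimpleGraph.card_neighborFinset_eq_degree]
    congr 1; ext x; simp [SimpleGraph.mem_neighborFinset]
  rw [this, nsmul_eq_mul]; exact mul_one_div_cancel (Nat.cast_ne_zero.mpr hdeg.ne')

/-- left eigenvector: degrees -/
lemma deg_left_eig (j : V) :
    ∑ i, (G.degree i : ℝ) * transMatrix G i j = (G.degree j : ℝ) := by
  unfold transMatrix
  have : ∀ i, (G.degree i : ℝ) * (if G.Adj i j then (1:ℝ) / (G.degree i) else 0)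
      = if G.Adj j i then (1:ℝ) else 0 := by
    intro i
    by_cases h : G.Adj i j
    · have hd : 0 < G.degree i := G.degree_pos_iff_exists_adj i |>.2 ⟨j, h⟩
      rw [if_pos h, if_pos h.symm]
      field_simp
    · rw [if_neg h, if_neg (fun hh => h hh.symm), mul_zero]
  simp_rw [this]
  rw [Finset.sum_ite, Finset.sum_const_zero, add_zero, Finset.sum_const]
  have : (Finset.univ.filter (G.Adj j ·)).card = G.degree j := by
    rw [← SimpleGraph.card_neighborFinset_eq_degree]
    congr 1; ext x; simp [SimpleGraph.mem_neighborFinset]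
  rw [this]; simp

lemma deg_left_eig_vec (w : V → ℝ) :
    ∑ i, (G.degree i : ℝ) * (transMatrix G *ᵥ w) i = ∑ i, (G.degree i : ℝ) * w i := by
  simp only [Matrix.mulVec, dotProduct, Finset.mul_sum]
  rw [Finset.sum_comm]
  congr 1; funext j
  calc ∑ i, (G.degree i : ℝ) * (transMatrix G i j * w j)
      = (∑ i, (G.degree i : ℝ) * transMatrix G i j) * w j := by
        rw [Finset.sum_mul]; congr 1; funext i; ring
    _ = (G.degree j : ℝ) * w j := by rw [deg_left_eig]

lemma eig_abs_le (hconn : G.Connected) (h2 : 2 ≤ Fintype.card V) {μ : ℝ} {v : V → ℝ}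
    (hv : v ≠ 0) (heig : transMatrix G *ᵥ v = μ • v) : |μ| ≤ 1 := by
  have : Nonempty V := Fintype.card_pos_iff.mp (by omega)
  obtain ⟨i, hi⟩ : ∃ i, ∀ j, |v j| ≤ |v i| := by
    obtain ⟨i, -, hi⟩ := Finset.exists_max_image Finset.univ (fun j => |v j|) ⟨Classical.arbitrary V, Finset.mem_univ _⟩
    · exact ⟨i, fun j => hi j (Finset.mem_univ j)⟩
  have hvi : 0 < |v i| := by
    rcases eq_or_ne (v i) 0 with h | h
    · exfalso; apply hv; funext j
      have := hi j; rw [h, abs_zero] at this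
      simpa using le_antisymm this (abs_nonneg _)
    · exact abs_pos.2 h
  have key : |μ| * |v i| ≤ |v i| := by
    have h1 : (transMatrix G *ᵥ v) i = μ * v i := by rw [heig]; rfl
    calc |μ| * |v i| = |μ * v i| := (abs_mul μ (v i)).symm
    _ = |∑ j, transMatrix G i j * v j| := by rw [← h1]; rfl
    _ ≤ ∑ j, |transMatrix G i j * v j| := Finset.abs_sum_le_sum_abs _ _
    _ ≤ ∑ j, transMatrix G i j * |v i| := by
        apply Finset.sum_le_sum; intro j _
        rw [abs_mul, abs_of_nonneg (trans_nonneg G i j)]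
        exact mul_le_mul_of_nonneg_left (hi j) (trans_nonneg G i j)
    _ = (∑ j, transMatrix G i j) * |v i| := by rw [Finset.sum_mul]
    _ = |v i| := by rw [trans_rowsum G i (degree_pos G hconn h2 i), one_mul]
  nlinarith [abs_nonneg μ]

variable {V : Type*} [Fintype V] [DecidableEq V] (G : SimpleGraph V) [DecidableRel G.Adj]


/-- Maximum principle: harmonic functions on connected graphs are constant. -/
lemma harmonic_const (hconn : G.Connected) (h2 : 2 ≤ Fintype.card V)
    {v : V → ℝ} (hv : transMatrix G *ᵥ v = v) (x y : V) : v x = v y := by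
  have : Nonempty V := Fintype.card_pos_iff.mp (by omega)
  obtain ⟨i₀, -, hi₀⟩ := Finset.exists_max_image Finset.univ v ⟨Classical.arbitrary V, Finset.mem_univ _⟩
  have hmax : ∀ j, v j ≤ v i₀ := fun j => hi₀ j (Finset.mem_univ j)
  -- adjacency-closedness of the max set
  have step : ∀ i, v i = v i₀ → ∀ j, G.Adj i j → v j = v i₀ := by
    intro i hvi j hij
    by_contra hne
    have hlt : v j < v i₀ := lt_of_le_of_ne (hmax j) hne
    have hrow := trans_rowsum G i (degree_pos G hconn h2 i)
    have hlt2 : ∑ j', transMatrix G i j' * v j' < ∑ j', transMatrix G i j' * v i₀ := by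
      apply Finset.sum_lt_sum
      · intro k _
        exact mul_le_mul_of_nonneg_left (hmax k) (trans_nonneg G i k)
      · refine ⟨j, Finset.mem_univ j, ?_⟩
        have hpos : 0 < transMatrix G i j := by
          unfold transMatrix
          rw [if_pos hij]
          have := degree_pos G hconn h2 i
          positivity
        exact (mul_lt_mul_iff_right₀ hpos).2 hlt
    have : (transMatrix G *ᵥ v) i < v i₀ := by
      have : ∑ j', transMatrix G i j' * v i₀ = v i₀ := by rw [← Finset.sum_mul, hrow, one_mul]
      rw [← this]
      exact hlt2
    rw [hv, hvi] at this
    exact lt_irrefl _ this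
  -- propagate along walks
  have walk : ∀ a b (p : G.Walk a b), v a = v i₀ → v b = v i₀ := by
    intro a b p
    induction p with
    | nil => exact id
    | cons h _ ih => intro ha; exact ih (step _ ha _ h)
  have all : ∀ z, v z = v i₀ := fun z => by
    obtain ⟨p⟩ := hconn.preconnected i₀ z
    exact walk _ _ p rfl
  rw [all x, all y]

/-- kernel of (P-1)^2 equals kernel of (P-1) -/
lemma ker_sq (hconn : G.Connected) (h2 : 2 ≤ Fintype.card V) {w : V → ℝ}
    (hw : (transMatrix G - 1) *ᵥ ((transMatrix G - 1) *ᵥ w) = 0) :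
    (transMatrix G - 1) *ᵥ w = 0 := by
  set u := (transMatrix G - 1) *ᵥ w with hu
  have hPu : transMatrix G *ᵥ u = u := by
    have := hw
    rw [Matrix.sub_mulVec, Matrix.one_mulVec, sub_eq_zero] at this
    exact this
  -- u is constant
  have hconst := harmonic_const G hconn h2 hPu
  -- sum of deg * u is zero
  have hsum : ∑ i, (G.degree i : ℝ) * u i = 0 := by
    have : ∑ i, (G.degree i : ℝ) * u i
        = ∑ i, (G.degree i : ℝ) * (transMatrix G *ᵥ w) i - ∑ i, (G.degree i : ℝ) * w i := by
      rw [← Finset.sum_sub_distrib]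
      congr 1; funext i
      rw [hu, Matrix.sub_mulVec, Matrix.one_mulVec]
      simp [Pi.sub_apply, mul_sub]
    rw [this, deg_left_eig_vec, sub_self]
  have : Nonempty V := Fintype.card_pos_iff.mp (by omega)
  set i₁ := Classical.arbitrary V
  have hdegsum : 0 < ∑ i, (G.degree i : ℝ) := by
    apply Finset.sum_pos
    · intro i _; exact_mod_cast degree_pos G hconn h2 i
    · exact ⟨i₁, Finset.mem_univ _⟩
  have : ∑ i, (G.degree i : ℝ) * u i = (∑ i, (G.degree i : ℝ)) * u i₁ := by
    rw [Finset.sum_mul]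
    congr 1; funext i
    rw [hconst i i₁]
  rw [this] at hsum
  have hu1 : u i₁ = 0 := by
    rcases mul_eq_zero.mp hsum with h | h
    · exact absurd h (ne_of_gt hdegsum)
    · exact h
  funext i
  show u i = 0
  rw [hconst i i₁, hu1]


variable {V : Type*} [Fintype V] [DecidableEq V]

/-- evaluation of charpoly -/
lemma charpoly_eval (M : Matrix V V ℝ) (t : ℝ) :
    M.charpoly.eval t = (t • (1 : Matrix V V ℝ) - M).det := by
  rw [Matrix.charpoly, ← Polynomial.coe_evalRingHom, RingHom.map_det]
  congr 1
  ext i j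
  by_cases h : i = j
  · subst h
    simp [Matrix.charmatrix_apply, Matrix.one_apply, Matrix.smul_apply]
  · simp [Matrix.charmatrix_apply, Matrix.one_apply_ne h, Matrix.diagonal_apply_ne _ h,
      Matrix.smul_apply]

/-- charpoly of a shifted matrix -/
lemma charpoly_shift (M : Matrix V V ℝ) (c : ℝ) :
    (M - c • (1 : Matrix V V ℝ)).charpoly = M.charpoly.comp (X + C c) := by
  rw [Matrix.charpoly, Matrix.charpoly]
  rw [Polynomial.comp_eq_aeval, ← AlgHom.coe_toRingHom, RingHom.map_det]
  congr 1
  ext i j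
  by_cases h : i = j
  · subst h
    simp [Matrix.charmatrix_apply, Matrix.smul_apply, Matrix.one_apply, Matrix.sub_apply]
    ring
  · simp [Matrix.charmatrix_apply, Matrix.diagonal_apply_ne _ h, Matrix.sub_apply,
      Matrix.smul_apply, Matrix.one_apply_ne h]

/-- a root of charpoly gives an eigenvector -/
lemma root_eigenvector {M : Matrix V V ℝ} {t : ℝ} (h : M.charpoly.eval t = 0) :
    ∃ v : V → ℝ, v ≠ 0 ∧ M *ᵥ v = t • v := by
  rw [charpoly_eval] at h
  obtain ⟨v, hv0, hv⟩ := Matrix.exists_mulVec_eq_zero_iff.mpr h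
  refine ⟨v, hv0, ?_⟩
  rw [Matrix.sub_mulVec, sub_eq_zero, Matrix.smul_mulVec, Matrix.one_mulVec] at hv
  exact hv.symm


variable (G : SimpleGraph V) [DecidableRel G.Adj]


lemma simple_one (hconn : G.Connected) (h2 : 2 ≤ Fintype.card V) {n : ℕ}
    (hn : Fintype.card V = n) (l : Fin n → ℝ)
    (hchar : (transMatrix G).charpoly = ∏ j : Fin n, (X - C (l j)))
    {j0 j1 : Fin n} (hne : j0 ≠ j1) (h0 : l j0 = 1) (h1 : l j1 = 1) : False := by
  have hne' : Nonempty V := Fintype.card_pos_iff.mp (by omega)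
  set P := transMatrix G with hP
  set A := P - (1 : Matrix V V ℝ) with hA
  -- charpoly of A
  have hAchar : A.charpoly = ∏ j : Fin n, (X - C (l j - 1)) := by
    have h1' : A = P - (1:ℝ) • (1 : Matrix V V ℝ) := by rw [one_smul]
    rw [h1', charpoly_shift, hchar, Polynomial.comp_eq_aeval, map_prod]
    congr 1; funext j
    simp only [map_sub, map_add, Polynomial.aeval_X, Polynomial.aeval_C,
      Polynomial.algebraMap_eq, Polynomial.C_sub, Polynomial.C_1]
    ring
  -- the endomorphism
  set φ : Module.End ℝ (V → ℝ) := Matrix.toLin' A with hφ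
  have hφchar : LinearMap.charpoly φ = A.charpoly := by
    rw [← LinearMap.charpoly_toMatrix φ (Pi.basisFun ℝ V), LinearMap.toMatrix_eq_toMatrix',
      hφ, LinearMap.toMatrix'_toLin']
  -- maxGenEigenspace 0 = ker
  have hker : ∀ (k : ℕ) (x : V → ℝ), (φ ^ k) x = 0 → φ x = 0 := by
    intro k
    induction k with
    | zero =>
      intro x hx
      have hx0 : x = 0 := by simpa using hx
      rw [hx0, map_zero]
    | succ k ih =>
      intro x hx
      rw [pow_succ, Module.End.mul_apply] at hx
      have : (φ ^ k) (φ x) = 0 := hx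
      have h2' : φ (φ x) = 0 := ih _ this
      -- translate to matrices
      have : A *ᵥ (A *ᵥ x) = 0 := by
        simpa [hφ, Matrix.toLin'_apply] using h2'
      have := ker_sq G hconn h2 (w := x) this
      simpa [hφ, Matrix.toLin'_apply] using this
  have hmax : φ.maxGenEigenspace 0 = LinearMap.ker φ := by
    ext x
    rw [Module.End.mem_maxGenEigenspace, LinearMap.mem_ker]
    constructor
    · rintro ⟨k, hk⟩
      simp only [zero_smul, sub_zero] at hk
      exact hker k x hk
    · intro hx; exact ⟨1, by simpa using hx⟩
  -- ker φ = span of constants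
  have hkspan : LinearMap.ker φ = Submodule.span ℝ {(fun _ => 1 : V → ℝ)} := by
    ext x
    rw [LinearMap.mem_ker, Submodule.mem_span_singleton]
    constructor
    · intro hx
      have hPx : P *ᵥ x = x := by
        have : A *ᵥ x = 0 := by simpa [hφ, Matrix.toLin'_apply] using hx
        rw [hA, Matrix.sub_mulVec, Matrix.one_mulVec, sub_eq_zero] at this
        exact this
      refine ⟨x (Classical.arbitrary V), ?_⟩
      funext i
      simp [harmonic_const G hconn h2 hPx (Classical.arbitrary V) i]
    · rintro ⟨a, rfl⟩
      show A *ᵥ _ = 0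
      funext i
      rw [hA, Matrix.sub_mulVec, Matrix.one_mulVec]
      have : (P *ᵥ (a • fun _ => (1:ℝ))) i = a := by
        simp only [Matrix.mulVec, dotProduct, Pi.smul_apply, smul_eq_mul, mul_one]
        rw [← Finset.sum_mul, trans_rowsum G i (degree_pos G hconn h2 i), one_mul]
      simp only [Pi.sub_apply, Pi.zero_apply, this, Pi.smul_apply, smul_eq_mul, mul_one, sub_self]
  have hrank1 : Module.finrank ℝ (φ.maxGenEigenspace 0) = 1 := by
    rw [hmax, hkspan]
    exact finrank_span_singleton (by
      intro h
      have := congrFun h (Classical.arbitrary V)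
      norm_num at this)
  -- trailing degree at least 2
  have h2le : 2 ≤ (∏ j : Fin n, (X - C (l j - 1))).natTrailingDegree := by
    have hmem : j1 ∈ (Finset.univ.erase j0) := Finset.mem_erase.mpr ⟨hne.symm, Finset.mem_univ _⟩
    set f : Fin n → ℝ[X] := fun j => X - C (l j - 1) with hf
    have hsplit : ∏ j : Fin n, f j
        = f j0 * (f j1 * ∏ j ∈ (Finset.univ.erase j0).erase j1, f j) := by
      rw [(Finset.mul_prod_erase _ f hmem), (Finset.mul_prod_erase _ f (Finset.mem_univ j0))]
    have hX0 : f j0 = (X : ℝ[X]) := by rw [hf]; simp [h0]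
    have hX1 : f j1 = (X : ℝ[X]) := by rw [hf]; simp [h1]
    rw [show (∏ j : Fin n, (X - C (l j - 1))) = ∏ j : Fin n, f j from rfl, hsplit, hX0, hX1]
    have hr : (∏ j ∈ (Finset.univ.erase j0).erase j1, f j) ≠ 0 := by
      apply Polynomial.Monic.ne_zero
      exact Polynomial.monic_prod_of_monic _ _ (fun j _ => by rw [hf]; exact Polynomial.monic_X_sub_C _)
    rw [natTrailingDegree_mul (Polynomial.X_ne_zero) (mul_ne_zero Polynomial.X_ne_zero hr),
      natTrailingDegree_mul (Polynomial.X_ne_zero) hr, Polynomial.natTrailingDegree_X]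
    omega
  rw [LinearMap.finrank_maxGenEigenspace_zero_eq, hφchar, hAchar] at hrank1
  omega

variable {V : Type*} [Fintype V] [DecidableEq V] (G : SimpleGraph V) [DecidableRel G.Adj]

lemma sum_eigs_zero {n : ℕ} (hn : Fintype.card V = n) (hn1 : 0 < n) (l : Fin n → ℝ)
    (hchar : (transMatrix G).charpoly = ∏ j : Fin n, (X - C (l j))) :
    ∑ j, l j = 0 := by
  have : Nonempty V := Fintype.card_pos_iff.mp (by omega)
  have htr : (transMatrix G).trace = 0 := by
    rw [Matrix.trace]
    apply Finset.sum_eq_zero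
    intro i _
    simp [Matrix.diag, transMatrix, G.irrefl]
  rw [Matrix.trace_eq_neg_charpoly_coeff, hchar, hn] at htr
  have hcoeff := Polynomial.prod_X_sub_C_coeff_card_pred (Finset.univ : Finset (Fin n)) l
    (by simpa using hn1)
  simp only [Finset.card_univ, Fintype.card_fin] at hcoeff
  rw [hcoeff] at htr
  linarith

lemma bipartite_neg_one (hbip : G.Colorable 2) (hne : Nonempty V)
    (hdeg : ∀ i, 0 < G.degree i) :
    ∃ v : V → ℝ, v ≠ 0 ∧ transMatrix G *ᵥ v = (-1 : ℝ) • v := by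
  obtain ⟨c⟩ := hbip
  set v : V → ℝ := fun i => if c i = 0 then 1 else -1 with hv
  refine ⟨v, ?_, ?_⟩
  · intro h
    have := congrFun h (Classical.arbitrary V)
    rw [hv] at this
    simp only [Pi.zero_apply] at this
    split at this <;> norm_num at this
  · funext i
    have hopp : ∀ j, G.Adj i j → v j = - v i := by
      intro j hij
      have hcc : c j ≠ c i := fun h => (c.valid hij.symm) h
      rw [hv]
      by_cases h0 : c i = 0
      · have hj : c j ≠ 0 := fun h => hcc (h.trans h0.symm)
        simp [h0, hj]
      · have hj : c j = 0 := by omega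
        simp [h0, hj]
    show ∑ j, transMatrix G i j * v j = -1 * v i
    calc ∑ j, transMatrix G i j * v j = ∑ j, transMatrix G i j * (if G.Adj i j then -v i else v j) := by
          apply Finset.sum_congr rfl
          intro j _
          by_cases h : G.Adj i j
          · rw [if_pos h, hopp j h]
          · simp [transMatrix, h]
      _ = ∑ j, transMatrix G i j * (-v i) := by
          apply Finset.sum_congr rfl
          intro j _
          by_cases h : G.Adj i j
          · rw [if_pos h]
          · simp [transMatrix, h]
      _ = -1 * v i := by
          rw [← Finset.sum_mul]
          have : ∑ j, transMatrix G i j = 1 := by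
            unfold transMatrix
            rw [Finset.sum_ite, Finset.sum_const_zero, add_zero, Finset.sum_const]
            have : (Finset.univ.filter (G.Adj i ·)).card = G.degree i := by
              rw [← SimpleGraph.card_neighborFinset_eq_degree]
              congr 1; ext x; simp [SimpleGraph.mem_neighborFinset]
            rw [this, nsmul_eq_mul]
            have := hdeg i
            exact mul_one_div_cancel (Nat.cast_ne_zero.mpr this.ne')
          rw [this]; ring

variable {V : Type*} [Fintype V] [DecidableEq V] (G : SimpleGraph V) [DecidableRel G.Adj]

lemma card_isLeft (k : ℕ) :
    (Finset.univ.filter (fun y : Fin k ⊕ Fin k => y.isLeft)).card = k := by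
  have : Finset.univ.filter (fun y : Fin k ⊕ Fin k => y.isLeft)
      = Finset.univ.image Sum.inl := by
    ext x
    cases x <;> simp
  rw [this, Finset.card_image_of_injective _ Sum.inl_injective, Finset.card_univ,
    Fintype.card_fin]

lemma card_isRight (k : ℕ) :
    (Finset.univ.filter (fun y : Fin k ⊕ Fin k => y.isRight)).card = k := by
  have : Finset.univ.filter (fun y : Fin k ⊕ Fin k => y.isRight)
      = Finset.univ.image Sum.inr := by
    ext x
    cases x <;> simp
  rw [this, Finset.card_image_of_injective _ Sum.inr_injective, Finset.card_univ,
    Fintype.card_fin]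

section Iso
variable {k : ℕ} (e : G ≃g completeBipartiteGraph (Fin k) (Fin k))

lemma iso_adj_iff (i j : V) :
    G.Adj i j ↔ ((e i).isLeft ∧ (e j).isRight ∨ (e i).isRight ∧ (e j).isLeft) := by
  rw [← e.map_adj_iff]
  rfl

lemma iso_card_side_left :
    (Finset.univ.filter (fun i : V => (e i).isLeft)).card = k := by
  refine Eq.trans ?_ (card_isLeft k)
  apply Finset.card_bij (fun i _ => e i)
  · intro a ha; simp only [Finset.mem_filter, Finset.mem_univ, true_and] at ha ⊢; exact ha
  · intro a _ b _ h; exact e.toEquiv.injective h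
  · intro b hb
    refine ⟨e.symm b, ?_, ?_⟩
    · simp only [Finset.mem_filter, Finset.mem_univ, true_and] at hb ⊢
      rw [RelIso.apply_symm_apply]
      exact hb
    · rw [RelIso.apply_symm_apply]

lemma iso_card_side_right :
    (Finset.univ.filter (fun i : V => (e i).isRight)).card = k := by
  refine Eq.trans ?_ (card_isRight k)
  apply Finset.card_bij (fun i _ => e i)
  · intro a ha; simp only [Finset.mem_filter, Finset.mem_univ, true_and] at ha ⊢; exact ha
  · intro a _ b _ h; exact e.toEquiv.injective h
  · intro b hb
    refine ⟨e.symm b, ?_, ?_⟩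
    · simp only [Finset.mem_filter, Finset.mem_univ, true_and] at hb ⊢
      rw [RelIso.apply_symm_apply]
      exact hb
    · rw [RelIso.apply_symm_apply]

lemma iso_degree (e : G ≃g completeBipartiteGraph (Fin k) (Fin k)) (i : V) : G.degree i = k := by
  rw [← SimpleGraph.card_neighborFinset_eq_degree]
  have h1 : G.neighborFinset i = Finset.univ.filter (fun j => G.Adj i j) := by
    ext x; simp [SimpleGraph.mem_neighborFinset]
  rw [h1]
  rcases hs : (e i) with a | a
  · have : Finset.univ.filter (fun j => G.Adj i j)
        = Finset.univ.filter (fun j : V => (e j).isRight) := by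
      ext j
      simp only [Finset.mem_filter, Finset.mem_univ, true_and]
      rw [iso_adj_iff G e, hs]
      cases hj : (e j) <;> simp
    rw [this, iso_card_side_right]
  · have : Finset.univ.filter (fun j => G.Adj i j)
        = Finset.univ.filter (fun j : V => (e j).isLeft) := by
      ext j
      simp only [Finset.mem_filter, Finset.mem_univ, true_and]
      rw [iso_adj_iff G e, hs]
      cases hj : (e j) <;> simp
    rw [this, iso_card_side_left]

/-- every eigenvalue of the K_{k,k} walk satisfies μ³ = μ -/
lemma iso_eig_cube (e : G ≃g completeBipartiteGraph (Fin k) (Fin k)) (hk : 0 < k) {μ : ℝ} {v : V → ℝ} (hv : v ≠ 0)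
    (heig : transMatrix G *ᵥ v = μ • v) : μ ^ 3 = μ := by
  classical
  set SL := ∑ i ∈ Finset.univ.filter (fun i : V => (e i).isLeft), v i with hSL
  set SR := ∑ i ∈ Finset.univ.filter (fun i : V => (e i).isRight), v i with hSR
  have hdeg : ∀ i : V, G.degree i = k := iso_degree G e
  have hmv : ∀ i : V, (transMatrix G *ᵥ v) i
      = (1 / k) * (if (e i).isLeft then SR else SL) := by
    intro i
    show ∑ j, transMatrix G i j * v j = _
    have : ∀ j, transMatrix G i j * v j
        = if G.Adj i j then (1 / (k:ℝ)) * v j else 0 := by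
      intro j
      unfold transMatrix
      by_cases h : G.Adj i j
      · rw [if_pos h, if_pos h, hdeg i]
      · rw [if_neg h, if_neg h, zero_mul]
    simp_rw [this]
    rw [Finset.sum_ite, Finset.sum_const_zero, add_zero, ← Finset.mul_sum]
    congr 1
    rcases hs : (e i) with a | a
    · have hfilter : Finset.univ.filter (fun j => G.Adj i j)
          = Finset.univ.filter (fun j : V => (e j).isRight) := by
        ext j
        simp only [Finset.mem_filter, Finset.mem_univ, true_and]
        rw [iso_adj_iff G e, hs]
        cases hj : (e j) <;> simp
      rw [hfilter]
      simp [hSR]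
    · have hfilter : Finset.univ.filter (fun j => G.Adj i j)
          = Finset.univ.filter (fun j : V => (e j).isLeft) := by
        ext j
        simp only [Finset.mem_filter, Finset.mem_univ, true_and]
        rw [iso_adj_iff G e, hs]
        cases hj : (e j) <;> simp
      rw [hfilter]
      simp [hSL]
  -- μ • v values
  have hval : ∀ i : V, μ * v i = (1 / k) * (if (e i).isLeft then SR else SL) := by
    intro i
    rw [← hmv i, heig]
    rfl
  have hμSL : μ * SL = SR := by
    rw [hSL, Finset.mul_sum]
    calc ∑ i ∈ Finset.univ.filter (fun i : V => (e i).isLeft), μ * v i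
        = ∑ i ∈ Finset.univ.filter (fun i : V => (e i).isLeft), (1/(k:ℝ)) * SR := by
          apply Finset.sum_congr rfl
          intro i hi
          simp only [Finset.mem_filter, Finset.mem_univ, true_and] at hi
          rw [hval i, if_pos hi]
      _ = SR := by
          rw [Finset.sum_const, iso_card_side_left G e, nsmul_eq_mul]
          field_simp
  have hμSR : μ * SR = SL := by
    rw [hSR, Finset.mul_sum]
    calc ∑ i ∈ Finset.univ.filter (fun i : V => (e i).isRight), μ * v i
        = ∑ i ∈ Finset.univ.filter (fun i : V => (e i).isRight), (1/(k:ℝ)) * SL := by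
          apply Finset.sum_congr rfl
          intro i hi
          simp only [Finset.mem_filter, Finset.mem_univ, true_and] at hi
          have : ¬ (e i).isLeft := by
            cases h : (e i) <;> simp_all
          rw [hval i, if_neg this]
      _ = SL := by
          rw [Finset.sum_const, iso_card_side_right G e, nsmul_eq_mul]
          field_simp
  obtain ⟨i, hi⟩ : ∃ i, v i ≠ 0 := by
    by_contra h
    push_neg at h
    exact hv (funext h)
  have h3 : μ ^ 3 * v i = μ * v i := by
    have h1 := hval i
    rcases hs : (e i).isLeft with _|_
    · -- isLeft = false
      rw [if_neg (by simp [hs])] at h1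
      calc μ ^ 3 * v i = μ ^ 2 * (μ * v i) := by ring
        _ = μ ^ 2 * ((1/k) * SL) := by rw [h1]
        _ = (1/k) * (μ * (μ * SL)) := by ring
        _ = (1/k) * SL := by rw [hμSL, hμSR]
        _ = μ * v i := h1.symm
    · rw [if_pos hs] at h1
      calc μ ^ 3 * v i = μ ^ 2 * (μ * v i) := by ring
        _ = μ ^ 2 * ((1/k) * SR) := by rw [h1]
        _ = (1/k) * (μ * (μ * SR)) := by ring
        _ = (1/k) * SR := by rw [hμSR, hμSL]
        _ = μ * v i := h1.symm
  have := mul_right_cancel₀ hi h3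
  nlinarith [this]
end Iso

end KemenyAux

/-- For any connected bipartite graph on `n` vertices, the Kemeny constant
`K = ∑_{j=2}^n 1/(1-λ_j)` satisfies `K ≥ (2n-3)/2`, and equality is attained by
the complete bipartite graph `K_{n/2,n/2}` (`n` even). -/
theorem kemeny_lower_bound_bipartite {V : Type*} [Fintype V] [DecidableEq V]
    (G : SimpleGraph V) [DecidableRel G.Adj] (hconn : G.Connected)
    (hbip : G.Colorable 2)
    (n : ℕ) (hn : Fintype.card V = n) (hn1 : 0 < n)
    (l : Fin n → ℝ) (hmono : Antitone l) (h1 : l ⟨0, hn1⟩ = 1)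
    (hchar : (transMatrix G).charpoly = ∏ j : Fin n, (X - C (l j))) :
    (2 * (n : ℝ) - 3) / 2 ≤ ∑ j ∈ univ.filter (fun j => j ≠ ⟨0, hn1⟩), 1 / (1 - l j) ∧
      (∀ k : ℕ, n = 2 * k →
        Nonempty (G ≃g completeBipartiteGraph (Fin k) (Fin k)) →
        ∑ j ∈ univ.filter (fun j => j ≠ ⟨0, hn1⟩), 1 / (1 - l j) = (2 * (n : ℝ) - 3) / 2) := by
  classical
  open KemenyAux in
  set z : Fin n := ⟨0, hn1⟩ with hz
  set P := transMatrix G with hP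
  set T := Finset.univ.filter (fun j : Fin n => j ≠ z) with hT
  rcases eq_or_lt_of_le (show 1 ≤ n from hn1) with hone | h2n
  · -- n = 1
    have hn1' : n = 1 := hone.symm
    subst hn1'
    have hTe : T = ∅ := by
      rw [hT]
      apply Finset.filter_eq_empty_iff.mpr
      intro j _
      simp [Subsingleton.elim j z]
    constructor
    · rw [hTe]
      norm_num
    · intro k hk
      omega
  · -- 2 ≤ n
    have h2 : 2 ≤ Fintype.card V := by omega
    have hne : Nonempty V := Fintype.card_pos_iff.mp (by omega)
    have hsum0 : ∑ j, l j = 0 := sum_eigs_zero G hn hn1 l hchar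
    have hroot : ∀ j : Fin n, P.charpoly.eval (l j) = 0 := by
      intro j
      rw [hchar, Polynomial.eval_prod]
      apply Finset.prod_eq_zero (Finset.mem_univ j)
      simp
    have heig : ∀ j : Fin n, ∃ v : V → ℝ, v ≠ 0 ∧ P *ᵥ v = l j • v :=
      fun j => root_eigenvector (hroot j)
    have hlb : ∀ j : Fin n, -1 ≤ l j := by
      intro j
      obtain ⟨v, hv0, hv⟩ := heig j
      have := eig_abs_le G hconn h2 hv0 hv
      exact (abs_le.mp this).1
    have hub : ∀ j : Fin n, l j ≤ 1 := by
      intro j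
      have : z ≤ j := by simp [hz, Fin.le_def]
      have := hmono this
      rw [h1] at this
      exact this
    have hne1 : ∀ j : Fin n, j ≠ z → l j ≠ 1 := by
      intro j hj hEq1
      exact simple_one G hconn h2 hn l hchar hj hEq1 h1
    have hlt1 : ∀ j : Fin n, j ≠ z → l j < 1 :=
      fun j hj => lt_of_le_of_ne (hub j) (hne1 j hj)
    -- -1 is an eigenvalue
    obtain ⟨j₀, hj₀⟩ : ∃ j : Fin n, l j = -1 := by
      obtain ⟨v, hv0, hv⟩ := bipartite_neg_one G hbip hne (degree_pos G hconn h2)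
      have hdet : ((-1 : ℝ) • (1 : Matrix V V ℝ) - P).det = 0 := by
        rw [← Matrix.exists_mulVec_eq_zero_iff]
        refine ⟨v, hv0, ?_⟩
        rw [Matrix.sub_mulVec, Matrix.smul_mulVec, Matrix.one_mulVec, hv, sub_self]
      have := (charpoly_eval P (-1)).trans hdet
      rw [hchar, Polynomial.eval_prod] at this
      obtain ⟨j, -, hj⟩ := Finset.prod_eq_zero_iff.mp this
      simp only [Polynomial.eval_sub, Polynomial.eval_X, Polynomial.eval_C, sub_eq_zero] at hj
      exact ⟨j, hj.symm⟩
    have hj₀z : j₀ ≠ z := by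
      intro h
      rw [h, h1] at hj₀
      norm_num at hj₀
    have hj₀T : j₀ ∈ T := by
      rw [hT]
      simp [hj₀z]
    -- rewrite T as erase
    have hTerase : T = Finset.univ.erase z := by
      rw [hT, Finset.filter_ne']
    have hcardT : T.card = n - 1 := by
      rw [hTerase, Finset.card_erase_of_mem (Finset.mem_univ z), Finset.card_univ,
        Fintype.card_fin]
    have hcardTe : (T.erase j₀).card = n - 2 := by
      rw [Finset.card_erase_of_mem hj₀T, hcardT]
      omega
    -- sum of l over T.erase j₀
    have hsumTl : ∑ j ∈ T.erase j₀, l j = 0 := by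
      have e1 : l z + ∑ j ∈ Finset.univ.erase z, l j = ∑ j, l j :=
        Finset.add_sum_erase _ l (Finset.mem_univ z)
      have e2 : l j₀ + ∑ j ∈ T.erase j₀, l j = ∑ j ∈ T, l j := by
        rw [← hTerase] at e1
        exact Finset.add_sum_erase _ l hj₀T
      rw [← hTerase] at e1
      rw [h1] at e1
      rw [hj₀] at e2
      rw [hsum0] at e1
      linarith
    have hsplit : ∑ j ∈ T, 1 / (1 - l j) = 1 / (1 - l j₀) + ∑ j ∈ T.erase j₀, 1 / (1 - l j) :=
      (Finset.add_sum_erase _ _ hj₀T).symm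
    constructor
    · -- the lower bound
      rw [hsplit, hj₀]
      have hterm : ∀ j ∈ T.erase j₀, 1 + l j ≤ 1 / (1 - l j) := by
        intro j hj
        have hjT : j ≠ z := by
          rw [hTerase] at hj
          exact (Finset.mem_erase.mp (Finset.mem_of_mem_erase hj)).1
        have h1j : l j < 1 := hlt1 j hjT
        have hpos : 0 < 1 - l j := by linarith
        rw [le_div_iff₀ hpos]
        nlinarith [sq_nonneg (l j)]
      have hge : (n : ℝ) - 2 ≤ ∑ j ∈ T.erase j₀, 1 / (1 - l j) := by
        calc (n : ℝ) - 2 = ∑ j ∈ T.erase j₀, (1 + l j) := by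
              rw [Finset.sum_add_distrib, hsumTl, add_zero, Finset.sum_const, hcardTe,
                nsmul_eq_mul, mul_one]
              have : (2 : ℕ) ≤ n := h2n
              push_cast [Nat.cast_sub this]
              ring
          _ ≤ ∑ j ∈ T.erase j₀, 1 / (1 - l j) := Finset.sum_le_sum hterm
      have : (1 : ℝ) - (-1) = 2 := by norm_num
      rw [this]
      linarith
    · -- equality for complete bipartite
      rintro k hk ⟨e⟩
      have hkpos : 0 < k := by omega
      have hval : ∀ j ∈ T, l j = 0 ∨ l j = -1 := by
        intro j hjT
        have hjz : j ≠ z := by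
          rw [hTerase] at hjT
          exact (Finset.mem_erase.mp hjT).1
        obtain ⟨v, hv0, hv⟩ := heig j
        have hcube := iso_eig_cube G e hkpos hv0 hv
        have : l j * (l j - 1) * (l j + 1) = 0 := by nlinarith [hcube]
        rcases mul_eq_zero.mp this with h | h
        · rcases mul_eq_zero.mp h with h | h
          · exact Or.inl h
          · exact absurd (by linarith : l j = 1) (hne1 j hjz)
        · exact Or.inr (by linarith)
      have hpt : ∀ j ∈ T, 1 / (1 - l j) = 1 + l j / 2 := by
        intro j hjT
        rcases hval j hjT with h | h <;> rw [h] <;> norm_num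
      have hsumT : ∑ j ∈ T, l j = -1 := by
        have e1 : l z + ∑ j ∈ Finset.univ.erase z, l j = ∑ j, l j :=
          Finset.add_sum_erase _ l (Finset.mem_univ z)
        rw [← hTerase, h1, hsum0] at e1
        linarith
      rw [Finset.sum_congr rfl hpt, Finset.sum_add_distrib, Finset.sum_const, hcardT,
        nsmul_eq_mul, mul_one]
      have hdiv : ∑ j ∈ T, l j / 2 = -1 / 2 := by
        rw [← Finset.sum_div, hsumT]
      rw [hdiv]
      have : (2 : ℕ) ≤ n := h2n
      push_cast [Nat.cast_sub (by omega : 1 ≤ n)]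
      ring
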